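/- arXiv:1207.2012 — 2 statements merged into one kernel-verified Lean document; each statement's English description precedes it below -/
import Mathlib

section
/- (Theorem 3.3, case 0 < γ < 1: unconditional stability of the one-dimensional implicit scheme.) Let γ ∈ (0,1), α ∈ (1,2], integers N ≥ 2 and N_t ≥ 1, reals τ > 0 and Δx > 0, and nonnegative reals c_{i,k} (1 ≤ i ≤ N-1, 1 ≤ k ≤ N_t). Set ω_{i,k} = -Γ(2-γ)·τ^γ·κ_α·c_{i,k}/(Γ(4-α)·(Δx)^α), so ω_{i,k} ≥ 0. Suppose real numbers ε^k_i (0 ≤ i ≤ N, 0 ≤ k ≤ N_t) satisfy ε^k_0 = ε^k_N = 0 for all 1 ≤ k ≤ N_t and, for all 1 ≤ i ≤ N-1 and 0 ≤ k ≤ N_t - 1, (1 - ω_{i,k+1}·g^{α,N}_{i,i})·ε^{k+1}_i - ω_{i,k+1}·Σ_{m=0, m≠i}^{N} g^{α,N}_{i,m}·ε^{k+1}_m = Σ_{s=0}^{k-1}(l_s - l_{s+1})·ε^{k-s}_i + l_k·ε^0_i. Then for every 0 ≤ k ≤ N_t: max_{0≤i≤N} |ε^k_i| ≤ max_{0≤i≤N}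 |ε^0_i|. -/
/-- The coefficients `a^ν_{j,m}` of the second-order discretization of the left
Riemann–Liouville fractional derivative. All powers are real powers. -/
noncomputable def aCoef (ν : ℝ) (j m : ℕ) : ℝ :=
  if m = j then 1
  else if m = 0 then ((j : ℝ) - 1) ^ (3 - ν) - (j : ℝ) ^ (2 - ν) * ((j : ℝ) - 3 + ν)
  else ((j : ℝ) - (m : ℝ) + 1) ^ (3 - ν) - 2 * ((j : ℝ) - (m : ℝ)) ^ (3 - ν)
    + ((j : ℝ) - (m : ℝ) - 1) ^ (3 - ν)

/-- The coefficients `b^ν_{j,m}` of the second-order discretization of the right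
Riemann–Liouville fractional derivative on a grid with `N` subintervals. -/
noncomputable def bCoef (ν : ℝ) (N j m : ℕ) : ℝ :=
  if m = j then 1
  else if m = N then (3 - ν - (N : ℝ) + (j : ℝ)) * ((N : ℝ) - (j : ℝ)) ^ (2 - ν)
    + ((N : ℝ) - (j : ℝ) - 1) ^ (3 - ν)
  else ((m : ℝ) - (j : ℝ) + 1) ^ (3 - ν) - 2 * ((m : ℝ) - (j : ℝ)) ^ (3 - ν)
    + ((m : ℝ) - (j : ℝ) - 1) ^ (3 - ν)

/-- The coefficients `p^ν_{i,m}` (left-derivative part), for `1 ≤ i ≤ N-1`. -/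
noncomputable def pCoef (ν : ℝ) (i m : ℕ) : ℝ :=
  if m < i then aCoef ν (i - 1) m - 2 * aCoef ν i m + aCoef ν (i + 1) m
  else if m = i then -2 * aCoef ν i i + aCoef ν (i + 1) i
  else if m = i + 1 then aCoef ν (i + 1) (i + 1)
  else 0

/-- The coefficients `q^ν_{i,m}` (right-derivative part), for `1 ≤ i ≤ N-1`. -/
noncomputable def qCoef (ν : ℝ) (N i m : ℕ) : ℝ :=
  if m + 1 < i then 0
  else if m + 1 = i then bCoef ν N (i - 1) (i - 1)
  else if m = i then -2 * bCoef ν N i i + bCoef ν N (i - 1) i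
  else bCoef ν N (i - 1) m - 2 * bCoef ν N i m + bCoef ν N (i + 1) m

/-- The Riesz-derivative difference coefficients `g^{ν,N}_{i,m} = p^ν_{i,m} + q^ν_{i,m}`. -/
noncomputable def gCoef (ν : ℝ) (N i m : ℕ) : ℝ := pCoef ν i m + qCoef ν N i m

/-- The L1 coefficients `l_s = (s+1)^(1-γ) - s^(1-γ)` of the Caputo discretization. -/
noncomputable def lCoef (γ : ℝ) (s : ℕ) : ℝ := ((s : ℝ) + 1) ^ (1 - γ) - (s : ℝ) ^ (1 - γ)

/-- The Riesz constant `κ_ν = 1 / (2 cos(νπ/2))`. -/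
noncomputable def kappa (ν : ℝ) : ℝ := 1 / (2 * Real.cos (ν * Real.pi / 2))

/-- The maximum of `|v i|` over `0 ≤ i ≤ N`. -/
noncomputable def maxAbs (N : ℕ) (v : ℕ → ℝ) : ℝ :=
  (Finset.range (N + 1)).sup' Finset.nonempty_range_add_one fun i => |v i|

/-- The maximum of `|v i j|` over `0 ≤ i ≤ Nx`, `0 ≤ j ≤ Ny`. -/
noncomputable def maxAbs2 (Nx Ny : ℕ) (v : ℕ → ℕ → ℝ) : ℝ :=
  ((Finset.range (Nx + 1)) ×ˢ (Finset.range (Ny + 1))).sup'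
    (Finset.nonempty_range_add_one.product Finset.nonempty_range_add_one) fun p => |v p.1 p.2|


open Real Set Finset

/-- convexity of `x ^ c` on `(0,∞)` for `c ≤ 0`. -/
lemma convexOn_rpow_nonpos {c : ℝ} (hc : c ≤ 0) :
    ConvexOn ℝ (Set.Ioi (0:ℝ)) (fun x : ℝ => x ^ c) := by
  have hIoi : interior (Set.Ioi (0:ℝ)) = Set.Ioi 0 := isOpen_Ioi.interior_eq
  have hd : ∀ x ∈ Set.Ioi (0:ℝ), HasDerivAt (fun y : ℝ => y ^ c) (c * x ^ (c-1)) x :=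
    fun x hx => Real.hasDerivAt_rpow_const (Or.inl (ne_of_gt hx))
  have hd2 : ∀ x ∈ Set.Ioi (0:ℝ),
      HasDerivAt (fun y : ℝ => c * y ^ (c-1)) (c * ((c-1) * x ^ (c-1-1))) x :=
    fun x hx => (Real.hasDerivAt_rpow_const (Or.inl (ne_of_gt hx))).const_mul c
  refine convexOn_of_hasDerivWithinAt2_nonneg (f' := fun x : ℝ => c * x ^ (c-1))
    (f'' := fun x : ℝ => c * ((c-1) * x ^ (c-1-1))) (convex_Ioi 0)
    (fun x hx => ((hd x hx).continuousAt).continuousWithinAt) ?_ ?_ ?_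
  · intro x hx; rw [hIoi] at hx ⊢; exact (hd x hx).hasDerivWithinAt
  · intro x hx; rw [hIoi] at hx ⊢; exact (hd2 x hx).hasDerivWithinAt
  · intro x hx; rw [hIoi] at hx
    have : (0:ℝ) ≤ x ^ (c-1-1) := Real.rpow_nonneg (le_of_lt hx) _
    have h2 : (0:ℝ) ≤ c * (c-1) := by nlinarith
    simpa [mul_assoc] using mul_nonneg h2 this

/-- `f(x) = (x+1)^β - 2x^β + (x-1)^β`. -/
noncomputable def fF (β x : ℝ) : ℝ := (x+1)^β - 2*x^β + (x-1)^β

lemma continuous_rpow_base (β : ℝ) (hβ : 0 < β) : Continuous (fun y : ℝ => y ^ β) :=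
  continuous_iff_continuousAt.2 (fun y => Real.continuousAt_rpow_const y β (Or.inr hβ.le))

lemma fF_convexOn {β : ℝ} (hβ1 : 1 ≤ β) (hβ2 : β ≤ 2) :
    ConvexOn ℝ (Set.Ici (1:ℝ)) (fF β) := by
  have hβ0 : (0:ℝ) < β := by linarith
  have hI : interior (Set.Ici (1:ℝ)) = Set.Ioi 1 := interior_Ici
  have hc := continuous_rpow_base β hβ0
  have hcont : ContinuousOn (fF β) (Set.Ici 1) := by
    have : Continuous (fF β) := by
      unfold fF
      exact ((hc.comp (continuous_id.add continuous_const)).sub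
        (continuous_const.mul (hc.comp continuous_id))).add
        (hc.comp (continuous_id.sub continuous_const))
    exact this.continuousOn
  have hd : ∀ x ∈ Set.Ioi (1:ℝ), HasDerivAt (fF β)
      (β*(x+1)^(β-1) - 2*(β*x^(β-1)) + β*(x-1)^(β-1)) x := by
    intro x hx
    have hx1 : (1:ℝ) < x := hx
    have h1 : HasDerivAt (fun y : ℝ => (y+1)^β) (1*β*(x+1)^(β-1)) x :=
      ((hasDerivAt_id x).add_const 1).rpow_const (Or.inl (by norm_num; linarith))
    have h2 : HasDerivAt (fun y : ℝ => y ^ β) (β*x^(β-1)) x :=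
      Real.hasDerivAt_rpow_const (Or.inl (by linarith))
    have h3 : HasDerivAt (fun y : ℝ => (y-1)^β) (1*β*(x-1)^(β-1)) x :=
      ((hasDerivAt_id x).sub_const 1).rpow_const (Or.inl (by norm_num; linarith))
    have := (h1.sub (h2.const_mul 2)).add h3
    refine this.congr_deriv ?_
    ring
  have hd2 : ∀ x ∈ Set.Ioi (1:ℝ), HasDerivAt
      (fun x : ℝ => β*(x+1)^(β-1) - 2*(β*x^(β-1)) + β*(x-1)^(β-1))
      (β*((β-1)*((x+1)^(β-1-1) - 2*x^(β-1-1) + (x-1)^(β-1-1)))) x := by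
    intro x hx
    have hx1 : (1:ℝ) < x := hx
    have h1 : HasDerivAt (fun y : ℝ => (y+1)^(β-1)) (1*(β-1)*(x+1)^(β-1-1)) x :=
      ((hasDerivAt_id x).add_const 1).rpow_const (Or.inl (by norm_num; linarith))
    have h2 : HasDerivAt (fun y : ℝ => y ^ (β-1)) ((β-1)*x^(β-1-1)) x :=
      Real.hasDerivAt_rpow_const (Or.inl (by linarith))
    have h3 : HasDerivAt (fun y : ℝ => (y-1)^(β-1)) (1*(β-1)*(x-1)^(β-1-1)) x :=
      ((hasDerivAt_id x).sub_const 1).rpow_const (Or.inl (by norm_num; linarith))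
    have := ((h1.const_mul β).sub ((h2.const_mul β).const_mul 2)).add (h3.const_mul β)
    refine this.congr_deriv ?_
    ring
  refine convexOn_of_hasDerivWithinAt2_nonneg
    (f' := fun x : ℝ => β*(x+1)^(β-1) - 2*(β*x^(β-1)) + β*(x-1)^(β-1))
    (f'' := fun x : ℝ => β*((β-1)*((x+1)^(β-1-1) - 2*x^(β-1-1) + (x-1)^(β-1-1))))
    (convex_Ici 1) hcont ?_ ?_ ?_
  · intro x hx; rw [hI] at hx ⊢; exact (hd x hx).hasDerivWithinAt
  · intro x hx; rw [hI] at hx ⊢; exact (hd2 x hx).hasDerivWithinAt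
  · intro x hx
    rw [hI] at hx
    have hx1 : (1:ℝ) < x := hx
    have hconv := convexOn_rpow_nonpos (c := β - 2) (by linarith)
    have hmid := hconv.2 (show x - 1 ∈ Set.Ioi (0:ℝ) by simp; linarith)
      (show x + 1 ∈ Set.Ioi (0:ℝ) by simp; linarith)
      (by norm_num : (0:ℝ) ≤ 1/2) (by norm_num : (0:ℝ) ≤ 1/2) (by norm_num)
    have harg : (1/2 : ℝ) • (x - 1) + (1/2 : ℝ) • (x + 1) = x := by
      simp [smul_eq_mul]; ring
    rw [harg] at hmid
    have hb : x ^ (β-2) ≤ 1/2 * (x-1)^(β-2) + 1/2 * (x+1)^(β-2) := by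
      simpa [smul_eq_mul] using hmid
    have h21 : β - 1 - 1 = β - 2 := by ring
    rw [h21]
    have : (0:ℝ) ≤ (x+1)^(β-2) - 2*x^(β-2) + (x-1)^(β-2) := by linarith
    have hb1 : (0:ℝ) ≤ β - 1 := by linarith
    positivity

lemma Du_concaveOn {β : ℝ} (hβ1 : 1 ≤ β) (hβ2 : β ≤ 2) :
    ConcaveOn ℝ (Set.Ici (1:ℝ)) (fun x : ℝ => (x+1)^β - x^β) := by
  have hβ0 : (0:ℝ) < β := by linarith
  have hI : interior (Set.Ici (1:ℝ)) = Set.Ioi 1 := interior_Ici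
  have hc := continuous_rpow_base β hβ0
  have hcont : ContinuousOn (fun x : ℝ => (x+1)^β - x^β) (Set.Ici 1) :=
    ((hc.comp (continuous_id.add continuous_const)).sub (hc.comp continuous_id)).continuousOn
  refine concaveOn_of_hasDerivWithinAt2_nonpos
    (f' := fun x : ℝ => β*(x+1)^(β-1) - β*x^(β-1))
    (f'' := fun x : ℝ => β*((β-1)*((x+1)^(β-1-1) - x^(β-1-1))))
    (convex_Ici 1) hcont ?_ ?_ ?_
  · intro x hx
    rw [hI] at hx ⊢
    have hx1 : (1:ℝ) < x := hx
    have h1 : HasDerivAt (fun y : ℝ => (y+1)^β) (1*β*(x+1)^(β-1)) x :=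
      ((hasDerivAt_id x).add_const 1).rpow_const (Or.inl (by norm_num; linarith))
    have h2 : HasDerivAt (fun y : ℝ => y ^ β) (β*x^(β-1)) x :=
      Real.hasDerivAt_rpow_const (Or.inl (by linarith))
    have h' : HasDerivAt (fun x : ℝ => (x+1)^β - x^β) (β*(x+1)^(β-1) - β*x^(β-1)) x := by
      refine (h1.sub h2).congr_deriv ?_; ring
    exact h'.hasDerivWithinAt
  · intro x hx
    rw [hI] at hx ⊢
    have hx1 : (1:ℝ) < x := hx
    have h1 : HasDerivAt (fun y : ℝ => (y+1)^(β-1)) (1*(β-1)*(x+1)^(β-1-1)) x :=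
      ((hasDerivAt_id x).add_const 1).rpow_const (Or.inl (by norm_num; linarith))
    have h2 : HasDerivAt (fun y : ℝ => y ^ (β-1)) ((β-1)*x^(β-1-1)) x :=
      Real.hasDerivAt_rpow_const (Or.inl (by linarith))
    have h' : HasDerivAt (fun x : ℝ => β*(x+1)^(β-1) - β*x^(β-1))
        (β*((β-1)*((x+1)^(β-1-1) - x^(β-1-1)))) x := by
      refine ((h1.const_mul β).sub (h2.const_mul β)).congr_deriv ?_; ring
    exact h'.hasDerivWithinAt
  · intro x hx
    rw [hI] at hx
    have hx1 : (1:ℝ) < x := hx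
    have hle : (x+1)^(β-1-1) ≤ x^(β-1-1) :=
      Real.rpow_le_rpow_of_nonpos (by linarith) (by linarith) (by linarith)
    have hb1 : (0:ℝ) ≤ β - 1 := by linarith
    have : (β-1)*((x+1)^(β-1-1) - x^(β-1-1)) ≤ 0 :=
      mul_nonpos_of_nonneg_of_nonpos hb1 (by linarith)
    exact mul_nonpos_of_nonneg_of_nonpos hβ0.le this

lemma fF_one {β : ℝ} (hβ1 : 1 ≤ β) : fF β 1 = (2:ℝ)^β - 2 := by
  unfold fF
  rw [show (1:ℝ)+1 = 2 by norm_num, show (1:ℝ)-1 = 0 by norm_num,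
    Real.one_rpow, Real.zero_rpow (by linarith)]
  ring

lemma fF_two {β : ℝ} : fF β 2 = (3:ℝ)^β - 2*(2:ℝ)^β + 1 := by
  unfold fF
  rw [show (2:ℝ)+1 = 3 by norm_num, show (2:ℝ)-1 = 1 by norm_num, Real.one_rpow]

lemma two_rpow_le_four {β : ℝ} (hβ2 : β ≤ 2) : (2:ℝ)^β ≤ 4 := by
  have := Real.rpow_le_rpow_of_exponent_le (by norm_num : (1:ℝ) ≤ 2) hβ2
  rwa [show ((2:ℝ):ℝ)^(2:ℝ) = 4 by
    rw [show (2:ℝ) = ((2:ℕ):ℝ) by norm_num, Real.rpow_natCast]; norm_num] at this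

lemma two_le_two_rpow {β : ℝ} (hβ1 : 1 ≤ β) : (2:ℝ) ≤ (2:ℝ)^β := by
  have := Real.rpow_le_rpow_of_exponent_le (by norm_num : (1:ℝ) ≤ 2) hβ1
  rwa [Real.rpow_one] at this

/-- The key inequality `3^β - 3·2^β + 3 ≤ 0` on `[1,2]`. -/
lemma key_ineq {β : ℝ} (hβ1 : 1 ≤ β) (hβ2 : β ≤ 2) :
    (3:ℝ)^β - 3*(2:ℝ)^β + 3 ≤ 0 := by
  set t := β - 1 with ht
  have ht0 : 0 ≤ t := by linarith
  have ht1 : t ≤ 1 := by linarith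
  have h3 : (3:ℝ)^β = 3 * (3:ℝ)^t := by
    rw [show β = 1 + t by ring, Real.rpow_add (by norm_num : (0:ℝ) < 3), Real.rpow_one]
  have h2 : (2:ℝ)^β = 2 * (2:ℝ)^t := by
    rw [show β = 1 + t by ring, Real.rpow_add (by norm_num : (0:ℝ) < 2), Real.rpow_one]
  rw [h3, h2]
  have hconc := (Real.concaveOn_rpow ht0 ht1).2
    (show (1:ℝ) ∈ Set.Ici (0:ℝ) by norm_num)
    (show (3:ℝ) ∈ Set.Ici (0:ℝ) by norm_num)
    (by norm_num : (0:ℝ) ≤ 1/2) (by norm_num : (0:ℝ) ≤ 1/2) (by norm_num)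
  have harg : (1/2 : ℝ) • (1:ℝ) + (1/2 : ℝ) • (3:ℝ) = 2 := by norm_num
  rw [harg] at hconc
  have h1t : (1:ℝ)^t = 1 := Real.one_rpow t
  have : (1/2:ℝ) * (1:ℝ)^t + (1/2:ℝ) * (3:ℝ)^t ≤ (2:ℝ)^t := by
    simpa [smul_eq_mul] using hconc
  rw [h1t] at this
  linarith

/-- `3^x + 7 - 4·2^x ≥ 0` on `[1,2]`. -/
lemma G1_nonneg_aux {x : ℝ} (hx1 : 1 ≤ x) (hx2 : x ≤ 2) :
    4*(2:ℝ)^x ≤ (3:ℝ)^x + 7 := by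
  -- g y = 3^y - 4·2^y is antitone on [1,2]; g 2 = -7
  set g : ℝ → ℝ := fun y => (3:ℝ)^y - 4*(2:ℝ)^y with hg
  have hderiv : ∀ y : ℝ, HasDerivAt g ((3:ℝ)^y * Real.log 3 - 4*((2:ℝ)^y * Real.log 2)) y := by
    intro y
    have h3 : HasDerivAt (fun y : ℝ => (3:ℝ)^y) ((3:ℝ)^y * Real.log 3) y :=
      (Real.hasStrictDerivAt_const_rpow (by norm_num) y).hasDerivAt
    have h2 : HasDerivAt (fun y : ℝ => (2:ℝ)^y) ((2:ℝ)^y * Real.log 2) y :=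
      (Real.hasStrictDerivAt_const_rpow (by norm_num) y).hasDerivAt
    exact h3.sub (h2.const_mul 4)
  have hanti : AntitoneOn g (Set.Icc 1 2) := by
    have hcont : ContinuousOn g (Set.Icc 1 2) :=
      fun y _ => ((hderiv y).continuousAt).continuousWithinAt
    refine antitoneOn_of_deriv_nonpos (convex_Icc 1 2) hcont
      (fun y hy => ((hderiv y).differentiableAt).differentiableWithinAt) ?_
    intro y hy
    rw [interior_Icc] at hy
    rw [(hderiv y).deriv]
    -- 3^y ≤ (9/4)·2^y for y ≤ 2, and 9 log 3 ≤ 16 log 2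
    have hsplit : (3:ℝ)^y = (2:ℝ)^y * (3/2:ℝ)^y := by
      rw [← Real.mul_rpow (by norm_num) (by norm_num)]; norm_num
    have h32 : (3/2:ℝ)^y ≤ (9/4:ℝ) := by
      have := Real.rpow_le_rpow_of_exponent_le (by norm_num : (1:ℝ) ≤ 3/2) (le_of_lt hy.2)
      rwa [show ((3/2:ℝ))^(2:ℝ) = 9/4 by
        rw [show (2:ℝ) = ((2:ℕ):ℝ) by norm_num, Real.rpow_natCast]; norm_num] at this
    have hlog : 9 * Real.log 3 ≤ 16 * Real.log 2 := by
      have h1 : Real.log (3^(9:ℕ)) ≤ Real.log (2^(16:ℕ)) := by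
        apply Real.log_le_log (by norm_num)
        norm_num
      rwa [Real.log_pow, Real.log_pow] at h1
      -- casts
    have hlog3 : 0 ≤ Real.log 3 := Real.log_nonneg (by norm_num)
    have h2pos : (0:ℝ) < (2:ℝ)^y := Real.rpow_pos_of_pos (by norm_num) y
    have : (3:ℝ)^y * Real.log 3 ≤ (2:ℝ)^y * ((9/4) * Real.log 3) := by
      rw [hsplit]
      rw [mul_assoc]
      apply mul_le_mul_of_nonneg_left _ h2pos.le
      exact mul_le_mul_of_nonneg_right h32 hlog3
    have h2' : (2:ℝ)^y * ((9/4) * Real.log 3) ≤ (2:ℝ)^y * (4 * Real.log 2) := by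
      apply mul_le_mul_of_nonneg_left _ h2pos.le
      linarith
    linarith
  have h2v : g 2 = -7 := by
    have e3 : ((3:ℝ))^(2:ℝ) = 9 := by
      rw [show (2:ℝ) = ((2:ℕ):ℝ) by norm_num, Real.rpow_natCast]; norm_num
    have e2 : ((2:ℝ))^(2:ℝ) = 4 := by
      rw [show (2:ℝ) = ((2:ℕ):ℝ) by norm_num, Real.rpow_natCast]; norm_num
    simp only [hg, e3, e2]; norm_num
  have := hanti (Set.mem_Icc.2 ⟨hx1, hx2⟩) (Set.mem_Icc.2 ⟨by norm_num, le_refl 2⟩) hx2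
  rw [h2v] at this
  simp only [hg] at this
  linarith

/-- Interior Riesz coefficient as a function of the gap. -/
noncomputable def GG (β : ℝ) (d : ℕ) : ℝ :=
  if d = 0 then 2*(2:ℝ)^β - 8
  else if d = 1 then (3:ℝ)^β - 4*(2:ℝ)^β + 7
  else fF β ((d:ℝ)+1) - 2*fF β (d:ℝ) + fF β ((d:ℝ)-1)

lemma GG_zero {β : ℝ} : GG β 0 = 2*(2:ℝ)^β - 8 := by simp [GG]

lemma GG_one {β : ℝ} : GG β 1 = (3:ℝ)^β - 4*(2:ℝ)^β + 7 := by simp [GG]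

lemma GG_of_two_le {β : ℝ} {d : ℕ} (hd : 2 ≤ d) :
    GG β d = fF β ((d:ℝ)+1) - 2*fF β (d:ℝ) + fF β ((d:ℝ)-1) := by
  rw [GG, if_neg (by omega), if_neg (by omega)]

lemma GG_nonneg {β : ℝ} (hβ1 : 1 ≤ β) (hβ2 : β ≤ 2) {d : ℕ} (hd : 1 ≤ d) :
    0 ≤ GG β d := by
  rcases eq_or_lt_of_le hd with h1 | h2
  · rw [← h1, GG_one]
    have := G1_nonneg_aux hβ1 hβ2
    linarith
  · have hd2 : 2 ≤ d := h2
    rw [GG_of_two_le hd2]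
    have hconv := (fF_convexOn hβ1 hβ2).2
      (show ((d:ℝ)-1) ∈ Set.Ici (1:ℝ) by
        simp only [Set.mem_Ici]
        have : (2:ℝ) ≤ (d:ℝ) := by exact_mod_cast hd2
        linarith)
      (show ((d:ℝ)+1) ∈ Set.Ici (1:ℝ) by
        simp only [Set.mem_Ici]
        have : (2:ℝ) ≤ (d:ℝ) := by exact_mod_cast hd2
        linarith)
      (by norm_num : (0:ℝ) ≤ 1/2) (by norm_num : (0:ℝ) ≤ 1/2) (by norm_num)
    have harg : (1/2 : ℝ) • ((d:ℝ)-1) + (1/2 : ℝ) • ((d:ℝ)+1) = (d:ℝ) := by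
      simp [smul_eq_mul]; ring
    rw [harg] at hconv
    have : fF β (d:ℝ) ≤ 1/2 * fF β ((d:ℝ)-1) + 1/2 * fF β ((d:ℝ)+1) := by
      simpa [smul_eq_mul] using hconv
    linarith

/-- `fF β` is nonincreasing from `K` to `K+1` for `K ≥ 2`. -/
lemma fF_step_nonpos {β : ℝ} (hβ1 : 1 ≤ β) (hβ2 : β ≤ 2) {K : ℕ} (hK : 2 ≤ K) :
    fF β ((K:ℝ)+1) - fF β (K:ℝ) ≤ 0 := by
  have hDu : (fun x : ℝ => (x+1)^β - x^β) = fun x : ℝ => (x+1)^β - x^β := rfl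
  have hKR : (2:ℝ) ≤ (K:ℝ) := by exact_mod_cast hK
  have hconc := (Du_concaveOn hβ1 hβ2).2
    (show ((K:ℝ)-1) ∈ Set.Ici (1:ℝ) by simp only [Set.mem_Ici]; linarith)
    (show ((K:ℝ)+1) ∈ Set.Ici (1:ℝ) by simp only [Set.mem_Ici]; linarith)
    (by norm_num : (0:ℝ) ≤ 1/2) (by norm_num : (0:ℝ) ≤ 1/2) (by norm_num)
  have harg : (1/2 : ℝ) • ((K:ℝ)-1) + (1/2 : ℝ) • ((K:ℝ)+1) = (K:ℝ) := by
    simp [smul_eq_mul]; ring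
  rw [harg] at hconc
  simp only [smul_eq_mul] at hconc
  unfold fF
  rw [show (K:ℝ)+1-1 = (K:ℝ) by ring] at *
  have hconc' := hconc
  rw [show (K:ℝ)-1+1 = (K:ℝ) by ring] at hconc' <;> try skip
  linarith [hconc, hconc']

/-- partial sums of `GG` from 1 to `K`, for `K ≥ 2`, are at most `4 - 2^β`. -/
lemma GG_partial_sum_le {β : ℝ} (hβ1 : 1 ≤ β) (hβ2 : β ≤ 2) {K : ℕ} (hK : 2 ≤ K) :
    ∑ d ∈ Finset.Icc 1 K, GG β d ≤ 4 - (2:ℝ)^β := by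
  set φ : ℕ → ℝ := fun d => fF β ((d:ℝ)+1) - fF β (d:ℝ) with hφ
  have hsplit : ∑ d ∈ Finset.Icc 1 K, GG β d
      = GG β 1 + ∑ d ∈ Finset.Icc 2 K, GG β d := by
    rw [show Finset.Icc 1 K = insert 1 (Finset.Icc 2 K) by
      ext x; simp [Finset.mem_Icc, Finset.mem_insert]; omega]
    rw [Finset.sum_insert (by simp [Finset.mem_Icc])]
  have htele : ∀ K : ℕ, 2 ≤ K → ∑ d ∈ Finset.Icc 2 K, GG β d = φ K - φ 1 := by
    intro K hK
    induction K, hK using Nat.le_induction with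
    | base =>
      rw [show Finset.Icc 2 2 = {2} by rfl, Finset.sum_singleton, GG_of_two_le (le_refl 2)]
      simp only [hφ]
      push_cast
      ring_nf
    | succ n hn ih =>
      rw [Finset.sum_Icc_succ_top (by omega), ih, GG_of_two_le (by omega)]
      simp only [hφ]
      push_cast
      ring_nf
  rw [hsplit, htele K hK]
  have h1 : φ K ≤ 0 := fF_step_nonpos hβ1 hβ2 hK
  have h2 : GG β 1 - φ 1 = 4 - (2:ℝ)^β := by
    simp only [hφ, GG_one]
    rw [show ((1:ℕ):ℝ)+1 = 2 by norm_num, show ((1:ℕ):ℝ) = 1 by norm_num,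
      fF_one hβ1, fF_two]
    ring
  linarith

/-- The key diagonal-dominance bound for interior rows. -/
lemma row_bound {β : ℝ} (hβ1 : 1 ≤ β) (hβ2 : β ≤ 2) (K1 K2 : ℕ) :
    (∑ d ∈ Finset.Icc 1 K1, GG β d) + (∑ d ∈ Finset.Icc 1 K2, GG β d)
      ≤ -(GG β 0) := by
  have h4 := two_rpow_le_four hβ2
  have h2 := two_le_two_rpow hβ1
  have hkey := key_ineq hβ1 hβ2
  rw [GG_zero]
  have hbound : ∀ K : ℕ, ∑ d ∈ Finset.Icc 1 K, GG β d
      ≤ max ((3:ℝ)^β - 4*(2:ℝ)^β + 7) (4 - (2:ℝ)^β) := by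
    intro K
    match K with
    | 0 =>
      rw [show Finset.Icc 1 0 = (∅ : Finset ℕ) by rfl, Finset.sum_empty]
      have := G1_nonneg_aux hβ1 hβ2
      exact le_max_of_le_left (by linarith)
    | 1 =>
      rw [show Finset.Icc 1 1 = {1} by rfl, Finset.sum_singleton, GG_one]
      exact le_max_left _ _
    | (n+2) =>
      exact le_max_of_le_right (GG_partial_sum_le hβ1 hβ2 (by omega))
  have hb1 := hbound K1
  have hb2 := hbound K2
  rcases max_cases ((3:ℝ)^β - 4*(2:ℝ)^β + 7) (4 - (2:ℝ)^β) with ⟨he, _⟩ | ⟨he, _⟩ <;>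
    rw [he] at hb1 hb2 <;> linarith

lemma aCoef_self (ν : ℝ) (j : ℕ) : aCoef ν j j = 1 := by
  unfold aCoef; rw [if_pos rfl]

lemma aCoef_gen (ν : ℝ) {j m : ℕ} (h0 : 1 ≤ m) (h : m < j) :
    aCoef ν j m = fF (3-ν) ((j:ℝ) - (m:ℝ)) := by
  unfold aCoef fF
  rw [if_neg (by omega), if_neg (by omega)]

lemma bCoef_self (ν : ℝ) (N j : ℕ) (h : j ≠ N ∨ True) : bCoef ν N j j = 1 := by
  unfold bCoef; rw [if_pos rfl]

lemma bCoef_gen (ν : ℝ) {N j m : ℕ} (h : j < m) (h2 : m < N) :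
    bCoef ν N j m = fF (3-ν) ((m:ℝ) - (j:ℝ)) := by
  unfold bCoef fF
  rw [if_neg (by omega), if_neg (by omega)]

lemma g_diag {α : ℝ} (hβ1 : 1 ≤ 3-α) {N i : ℕ} (hi1 : 1 ≤ i) (hi2 : i ≤ N - 1)
    (hN : 2 ≤ N) : gCoef α N i i = GG (3-α) 0 := by
  have hiN : i < N := by omega
  unfold gCoef pCoef qCoef
  rw [if_neg (lt_irrefl i), if_pos rfl, if_neg (by omega), if_neg (by omega), if_pos rfl]
  rw [aCoef_self, aCoef_gen α hi1 (by omega), bCoef_self α N i (Or.inr trivial),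
    bCoef_gen α (by omega : i - 1 < i) hiN]
  rw [show ((i+1:ℕ):ℝ) - (i:ℝ) = 1 by push_cast; ring,
    show (i:ℝ) - ((i-1:ℕ):ℝ) = 1 by rw [Nat.cast_sub hi1]; push_cast; ring]
  rw [fF_one hβ1, GG]
  norm_num
  ring

lemma g_sub {α : ℝ} (hβ1 : 1 ≤ 3-α) {N m : ℕ} (hm1 : 1 ≤ m) (hm2 : m + 1 ≤ N - 1)
    (hN : 2 ≤ N) : gCoef α N (m+1) m = GG (3-α) 1 := by
  unfold gCoef pCoef qCoef
  rw [if_pos (by omega : m < m+1), if_neg (by omega), if_pos rfl]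
  rw [show m+1-1 = m by omega]
  rw [aCoef_self, aCoef_gen α hm1 (by omega : m < m+1), aCoef_gen α hm1 (by omega : m < m+1+1),
    bCoef_self α N m (Or.inr trivial)]
  rw [show ((m+1:ℕ):ℝ) - (m:ℝ) = 1 by push_cast; ring,
    show ((m+1+1:ℕ):ℝ) - (m:ℝ) = 2 by push_cast; ring]
  rw [fF_one hβ1, fF_two, GG]
  norm_num
  ring

lemma g_sup {α : ℝ} (hβ1 : 1 ≤ 3-α) {N i : ℕ} (hi1 : 1 ≤ i) (hi2 : i + 1 ≤ N - 1)
    (hN : 2 ≤ N) : gCoef α N i (i+1) = GG (3-α) 1 := by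
  unfold gCoef pCoef qCoef
  rw [if_neg (by omega), if_neg (by omega), if_pos rfl,
    if_neg (by omega), if_neg (by omega), if_neg (by omega)]
  rw [aCoef_self,
    bCoef_gen α (by omega : i - 1 < i+1) (by omega : i+1 < N),
    bCoef_gen α (by omega : i < i+1) (by omega : i+1 < N),
    bCoef_self α N (i+1) (Or.inr trivial)]
  rw [show ((i+1:ℕ):ℝ) - ((i-1:ℕ):ℝ) = 2 by rw [Nat.cast_sub hi1]; push_cast; ring,
    show ((i+1:ℕ):ℝ) - (i:ℝ) = 1 by push_cast; ring]
  rw [fF_one hβ1, fF_two, GG]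
  norm_num
  ring

lemma g_left {α : ℝ} {N i m : ℕ} (hm1 : 1 ≤ m) (hmi : m + 2 ≤ i) (hi2 : i ≤ N - 1)
    (hN : 2 ≤ N) : gCoef α N i m = GG (3-α) (i - m) := by
  have hd2 : 2 ≤ i - m := by omega
  unfold gCoef pCoef qCoef
  rw [if_pos (by omega : m < i), if_pos (by omega : m + 1 < i)]
  rw [aCoef_gen α hm1 (by omega : m < i-1), aCoef_gen α hm1 (by omega : m < i),
    aCoef_gen α hm1 (by omega : m < i+1)]
  rw [GG, if_neg (by omega), if_neg (by omega)]
  rw [show ((i-1:ℕ):ℝ) - (m:ℝ) = ((i-m:ℕ):ℝ) - 1 by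
      rw [Nat.cast_sub (by omega : 1 ≤ i), Nat.cast_sub (by omega : m ≤ i)]; ring,
    show (i:ℝ) - (m:ℝ) = ((i-m:ℕ):ℝ) by rw [Nat.cast_sub (by omega : m ≤ i)],
    show ((i+1:ℕ):ℝ) - (m:ℝ) = ((i-m:ℕ):ℝ) + 1 by
      rw [Nat.cast_sub (by omega : m ≤ i)]; push_cast; ring]
  ring

lemma g_right {α : ℝ} {N i m : ℕ} (hi1 : 1 ≤ i) (him : i + 2 ≤ m) (hm2 : m ≤ N - 1)
    (hN : 2 ≤ N) : gCoef α N i m = GG (3-α) (m - i) := by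
  have hd2 : 2 ≤ m - i := by omega
  unfold gCoef pCoef qCoef
  rw [if_neg (by omega), if_neg (by omega), if_neg (by omega),
    if_neg (by omega), if_neg (by omega), if_neg (by omega)]
  rw [bCoef_gen α (by omega : i - 1 < m) (by omega : m < N),
    bCoef_gen α (by omega : i < m) (by omega : m < N),
    bCoef_gen α (by omega : i + 1 < m) (by omega : m < N)]
  rw [GG, if_neg (by omega), if_neg (by omega)]
  rw [show (m:ℝ) - ((i-1:ℕ):ℝ) = ((m-i:ℕ):ℝ) + 1 by
      rw [Nat.cast_sub hi1, Nat.cast_sub (by omega : i ≤ m)]; ring,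
    show (m:ℝ) - (i:ℝ) = ((m-i:ℕ):ℝ) by rw [Nat.cast_sub (by omega : i ≤ m)],
    show (m:ℝ) - ((i+1:ℕ):ℝ) = ((m-i:ℕ):ℝ) - 1 by
      rw [Nat.cast_sub (by omega : i ≤ m)]; push_cast; ring]
  ring

/-- Theorem 3.3 (case `0 < γ < 1`): unconditional stability of the one-dimensional
implicit finite difference scheme. -/
theorem implicit_1d_stable (γ α : ℝ) (hγ : γ ∈ Set.Ioo (0:ℝ) 1) (hα : α ∈ Set.Ioc (1:ℝ) 2)
    (N Nt : ℕ) (hN : 2 ≤ N) (hNt : 1 ≤ Nt)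
    (τ Δx : ℝ) (hτ : 0 < τ) (hΔx : 0 < Δx)
    (c : ℕ → ℕ → ℝ)
    (hc : ∀ i k : ℕ, 1 ≤ i → i ≤ N - 1 → 1 ≤ k → k ≤ Nt → 0 ≤ c i k)
    (ω : ℕ → ℕ → ℝ)
    (hω : ∀ i k : ℕ, 1 ≤ i → i ≤ N - 1 → 1 ≤ k → k ≤ Nt →
      ω i k = -(Real.Gamma (2 - γ) * τ ^ γ * kappa α * c i k) / (Real.Gamma (4 - α) * Δx ^ α))
    (ε : ℕ → ℕ → ℝ)
    (hbc : ∀ k : ℕ, 1 ≤ k → k ≤ Nt → ε k 0 = 0 ∧ ε k N = 0)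
    (hscheme : ∀ i k : ℕ, 1 ≤ i → i ≤ N - 1 → k + 1 ≤ Nt →
      (1 - ω i (k + 1) * gCoef α N i i) * ε (k + 1) i
        - ω i (k + 1) * ∑ m ∈ (Finset.range (N + 1)).erase i, gCoef α N i m * ε (k + 1) m
      = (∑ s ∈ Finset.range k, (lCoef γ s - lCoef γ (s + 1)) * ε (k - s) i)
        + lCoef γ k * ε 0 i) :
    ∀ k : ℕ, k ≤ Nt → maxAbs N (ε k) ≤ maxAbs N (ε 0) := by
  obtain ⟨hγ0, hγ1⟩ := hγ
  obtain ⟨hα1, hα2⟩ := hα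
  have hβ1 : 1 ≤ 3 - α := by linarith
  have hβ2 : 3 - α ≤ 2 := by linarith
  have hp0 : 0 < 1 - γ := by linarith
  have hp1 : 1 - γ ≤ 1 := by linarith
  -- basic lCoef facts
  have hl0 : lCoef γ 0 = 1 := by
    unfold lCoef
    rw [show ((0:ℕ):ℝ) = 0 by norm_num]
    rw [Real.zero_rpow (by linarith), show (0:ℝ)+1 = 1 by norm_num, Real.one_rpow]
    ring
  have hlnn : ∀ s : ℕ, 0 ≤ lCoef γ s := by
    intro s
    unfold lCoef
    have := Real.rpow_le_rpow (by positivity : (0:ℝ) ≤ (s:ℝ))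
      (by linarith : (s:ℝ) ≤ (s:ℝ)+1) (by linarith : (0:ℝ) ≤ 1-γ)
    linarith
  have hlmono : ∀ s : ℕ, lCoef γ (s+1) ≤ lCoef γ s := by
    intro s
    unfold lCoef
    have hconc := (Real.concaveOn_rpow (by linarith : (0:ℝ) ≤ 1-γ) hp1).2
      (show ((s:ℝ)) ∈ Set.Ici (0:ℝ) by simp)
      (show ((s:ℝ)+2) ∈ Set.Ici (0:ℝ) by simp; positivity)
      (by norm_num : (0:ℝ) ≤ 1/2) (by norm_num : (0:ℝ) ≤ 1/2) (by norm_num)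
    rw [show (1/2 : ℝ) • ((s:ℝ)) + (1/2 : ℝ) • ((s:ℝ)+2) = (s:ℝ)+1 by
      simp [smul_eq_mul]; ring] at hconc
    simp only [smul_eq_mul] at hconc
    push_cast
    rw [show (s:ℝ)+1+1 = (s:ℝ)+2 by ring]
    linarith
  -- nonnegativity of ω
  have hωnn : ∀ i k : ℕ, 1 ≤ i → i ≤ N - 1 → 1 ≤ k → k ≤ Nt → 0 ≤ ω i k := by
    intro i k h1 h2 h3 h4
    rw [hω i k h1 h2 h3 h4]
    have hG2 : 0 < Real.Gamma (2 - γ) := Real.Gamma_pos_of_pos (by linarith)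
    have hG4 : 0 < Real.Gamma (4 - α) := Real.Gamma_pos_of_pos (by linarith)
    have hτγ : 0 < τ ^ γ := Real.rpow_pos_of_pos hτ γ
    have hΔα : 0 < Δx ^ α := Real.rpow_pos_of_pos hΔx α
    have hκ : kappa α < 0 := by
      unfold kappa
      have hπ : 0 < Real.pi := Real.pi_pos
      have hcos : Real.cos (α * Real.pi / 2) < 0 := by
        apply Real.cos_neg_of_pi_div_two_lt_of_lt
        · rw [div_lt_div_iff₀ (by norm_num) (by norm_num)] at *
          nlinarith
        · nlinarith
      have : 2 * Real.cos (α * Real.pi / 2) < 0 := by linarith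
      exact div_neg_of_pos_of_neg (by norm_num) this
    have hcnn := hc i k h1 h2 h3 h4
    apply div_nonneg _ (by positivity)
    have h5 : 0 ≤ (Real.Gamma (2 - γ) * τ ^ γ) * ((-kappa α) * c i k) := by
      apply mul_nonneg (by positivity)
      exact mul_nonneg (by linarith) hcnn
    nlinarith [h5]
  -- main induction
  intro k
  induction k using Nat.strong_induction_on with
  | _ k IH =>
  intro hkNt
  match k, hkNt, IH with
  | 0, _, _ => exact le_refl _
  | (j+1), hkNt, IH =>
  obtain ⟨i₀, hi₀mem, hEeq⟩ :=
    Finset.exists_mem_eq_sup' (s := Finset.range (N+1)) (Finset.nonempty_range_add_one)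
      (fun i => |ε (j+1) i|)
  have hi₀N : i₀ ≤ N := by
    have := Finset.mem_range.1 hi₀mem; omega
  have hEdef : maxAbs N (ε (j+1)) = |ε (j+1) i₀| := hEeq
  have hM0nn : (0:ℝ) ≤ maxAbs N (ε 0) := by
    have : |ε 0 0| ≤ maxAbs N (ε 0) :=
      Finset.le_sup' (fun i => |ε 0 i|) (Finset.mem_range.2 (by omega))
    have := abs_nonneg (ε 0 0)
    linarith
  by_cases hbdry : i₀ = 0 ∨ i₀ = N
  · rw [hEdef]
    rcases hbdry with h | h <;> rw [h]
    · rw [(hbc (j+1) (by omega) hkNt).1]; simpa using hM0nn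
    · rw [(hbc (j+1) (by omega) hkNt).2]; simpa using hM0nn
  · push_neg at hbdry
    have hi01 : 1 ≤ i₀ := by omega
    have hi02 : i₀ ≤ N - 1 := by omega
    have hsch := hscheme i₀ j hi01 hi02 hkNt
    set w := ω i₀ (j+1) with hwdef
    set e := ε (j+1) i₀ with hedef
    set E := maxAbs N (ε (j+1)) with hEdef2
    set M0 := maxAbs N (ε 0) with hM0def
    have hEnn : 0 ≤ E := by rw [hEdef]; exact abs_nonneg _
    have hwnn : 0 ≤ w := hωnn i₀ (j+1) hi01 hi02 (by omega) hkNt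
    have hgii : gCoef α N i₀ i₀ = GG (3-α) 0 := g_diag hβ1 hi01 hi02 hN
    have hg0neg : GG (3-α) 0 ≤ 0 := by
      rw [GG_zero]
      have := two_rpow_le_four hβ2
      linarith
    -- bound on the history term R
    have hIH' : ∀ m : ℕ, m ≤ j → |ε m i₀| ≤ M0 := by
      intro m hm
      have h1 : maxAbs N (ε m) ≤ M0 := IH m (by omega) (by omega)
      have h2 : |ε m i₀| ≤ maxAbs N (ε m) :=
        Finset.le_sup' (fun i => |ε m i|) (Finset.mem_range.2 (by omega : i₀ < N + 1))
      linarith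
    have hRb : |(∑ s ∈ Finset.range j, (lCoef γ s - lCoef γ (s + 1)) * ε (j - s) i₀)
        + lCoef γ j * ε 0 i₀| ≤ M0 := by
      have htri : |(∑ s ∈ Finset.range j, (lCoef γ s - lCoef γ (s + 1)) * ε (j - s) i₀)
          + lCoef γ j * ε 0 i₀|
          ≤ (∑ s ∈ Finset.range j, |(lCoef γ s - lCoef γ (s + 1)) * ε (j - s) i₀|)
            + |lCoef γ j * ε 0 i₀| := by
        refine le_trans (abs_add_le _ _) ?_
        have := Finset.abs_sum_le_sum_abs
          (fun s => (lCoef γ s - lCoef γ (s + 1)) * ε (j - s) i₀) (Finset.range j)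
        linarith
      have hterm : ∀ s ∈ Finset.range j,
          |(lCoef γ s - lCoef γ (s + 1)) * ε (j - s) i₀|
            ≤ (lCoef γ s - lCoef γ (s + 1)) * M0 := by
        intro s _
        rw [abs_mul, abs_of_nonneg (by linarith [hlmono s])]
        exact mul_le_mul_of_nonneg_left (hIH' (j-s) (by omega)) (by linarith [hlmono s])
      have hsum := Finset.sum_le_sum hterm
      have htele : ∑ s ∈ Finset.range j, (lCoef γ s - lCoef γ (s + 1)) * M0
          = (lCoef γ 0 - lCoef γ j) * M0 := by
        rw [← Finset.sum_mul, Finset.sum_range_sub' (lCoef γ) j]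
      have hlast : |lCoef γ j * ε 0 i₀| ≤ lCoef γ j * M0 := by
        rw [abs_mul, abs_of_nonneg (hlnn j)]
        exact mul_le_mul_of_nonneg_left (hIH' 0 (by omega)) (hlnn j)
      rw [htele] at hsum
      calc |(∑ s ∈ Finset.range j, (lCoef γ s - lCoef γ (s + 1)) * ε (j - s) i₀)
          + lCoef γ j * ε 0 i₀|
          ≤ (∑ s ∈ Finset.range j, |(lCoef γ s - lCoef γ (s + 1)) * ε (j - s) i₀|)
            + |lCoef γ j * ε 0 i₀| := htri
        _ ≤ (lCoef γ 0 - lCoef γ j) * M0 + lCoef γ j * M0 := by linarith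
        _ = lCoef γ 0 * M0 := by ring
        _ = M0 := by rw [hl0]; ring
    -- bound on the spatial sum T
    set T := ∑ m ∈ (Finset.range (N + 1)).erase i₀, gCoef α N i₀ m * ε (j+1) m with hTdef
    set s' := (Finset.Icc 1 (N-1)).erase i₀ with hs'def
    have hT1 : T = ∑ m ∈ s', gCoef α N i₀ m * ε (j+1) m := by
      rw [hTdef]
      symm
      apply Finset.sum_subset
      · intro m hm
        simp only [hs'def, Finset.mem_erase, Finset.mem_Icc] at hm
        simp only [Finset.mem_erase, Finset.mem_range]
        omega
      · intro m hm hnm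
        simp only [Finset.mem_erase, Finset.mem_range] at hm
        simp only [hs'def, Finset.mem_erase, Finset.mem_Icc] at hnm
        have : m = 0 ∨ m = N := by omega
        rcases this with h | h <;> rw [h]
        · rw [(hbc (j+1) (by omega) hkNt).1]; ring
        · rw [(hbc (j+1) (by omega) hkNt).2]; ring
    have hgG : ∀ m ∈ s', gCoef α N i₀ m = GG (3-α) (if m < i₀ then i₀ - m else m - i₀) := by
      intro m hm
      simp only [hs'def, Finset.mem_erase, Finset.mem_Icc] at hm
      obtain ⟨hne, hm1, hm2⟩ := hm
      by_cases hlt : m < i₀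
      · rw [if_pos hlt]
        rcases Nat.lt_or_ge (m+1) i₀ with h | h
        · exact g_left hm1 (by omega) hi02 hN
        · have : i₀ = m + 1 := by omega
          subst this
          rw [show m + 1 - m = 1 by omega]
          exact g_sub hβ1 hm1 (by omega) hN
      · rw [if_neg hlt]
        have hgt : i₀ < m := by omega
        rcases Nat.lt_or_ge (i₀+1) m with h | h
        · exact g_right hi01 (by omega) hm2 hN
        · have : m = i₀ + 1 := by omega
          subst this
          rw [show i₀ + 1 - i₀ = 1 by omega]
          exact g_sup hβ1 hi01 (by omega) hN
    have hgnn : ∀ m ∈ s', 0 ≤ gCoef α N i₀ m := by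
      intro m hm
      rw [hgG m hm]
      apply GG_nonneg hβ1 hβ2
      simp only [hs'def, Finset.mem_erase, Finset.mem_Icc] at hm
      split <;> omega
    have hεE : ∀ m ∈ s', |ε (j+1) m| ≤ E := by
      intro m hm
      simp only [hs'def, Finset.mem_erase, Finset.mem_Icc] at hm
      exact Finset.le_sup' (fun i => |ε (j+1) i|) (Finset.mem_range.2 (by omega : m < N + 1))
    have hTb : |T| ≤ (∑ m ∈ s', gCoef α N i₀ m) * E := by
      rw [hT1]
      refine le_trans (Finset.abs_sum_le_sum_abs _ _) ?_
      rw [Finset.sum_mul]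
      apply Finset.sum_le_sum
      intro m hm
      rw [abs_mul, abs_of_nonneg (hgnn m hm)]
      exact mul_le_mul_of_nonneg_left (hεE m hm) (hgnn m hm)
    -- the row sum bound
    have hsplit : ∑ m ∈ s', gCoef α N i₀ m
        = (∑ d ∈ Finset.Icc 1 (i₀-1), GG (3-α) d)
          + (∑ d ∈ Finset.Icc 1 (N-1-i₀), GG (3-α) d) := by
      rw [Finset.sum_congr rfl hgG]
      have hdisj : Disjoint (Finset.Icc 1 (i₀-1)) (Finset.Icc (i₀+1) (N-1)) := by
        apply Finset.disjoint_left.2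
        intro a ha hb
        simp only [Finset.mem_Icc] at ha hb
        omega
      have hset : s' = Finset.Icc 1 (i₀-1) ∪ Finset.Icc (i₀+1) (N-1) := by
        ext x
        simp only [hs'def, Finset.mem_erase, Finset.mem_Icc, Finset.mem_union]
        omega
      rw [hset, Finset.sum_union hdisj]
      congr 1
      · apply Finset.sum_nbij' (fun m => i₀ - m) (fun d => i₀ - d)
        · intro a ha; simp only [Finset.mem_Icc] at *; omega
        · intro a ha; simp only [Finset.mem_Icc] at *; omega
        · intro a ha; simp only [Finset.mem_Icc] at ha; omega
        · intro a ha; simp only [Finset.mem_Icc] at ha; omega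
        · intro a ha
          simp only [Finset.mem_Icc] at ha
          rw [if_pos (by omega)]
      · apply Finset.sum_nbij' (fun m => m - i₀) (fun d => d + i₀)
        · intro a ha; simp only [Finset.mem_Icc] at *; omega
        · intro a ha; simp only [Finset.mem_Icc] at *; omega
        · intro a ha; simp only [Finset.mem_Icc] at ha; omega
        · intro a ha; simp only [Finset.mem_Icc] at ha; omega
        · intro a ha
          simp only [Finset.mem_Icc] at ha
          rw [if_neg (by omega)]
    have hrow : ∑ m ∈ s', gCoef α N i₀ m ≤ -(GG (3-α) 0) := by
      rw [hsplit]
      exact row_bound hβ1 hβ2 _ _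
    -- combine
    have heq : (1 - w * GG (3-α) 0) * e = ((∑ s ∈ Finset.range j,
        (lCoef γ s - lCoef γ (s + 1)) * ε (j - s) i₀) + lCoef γ j * ε 0 i₀) + w * T := by
      rw [← hgii]
      linarith [hsch]
    have hcoef : (0:ℝ) ≤ 1 - w * GG (3-α) 0 := by nlinarith
    have hEbound : (1 - w * GG (3-α) 0) * E ≤ M0 + w * (-(GG (3-α) 0)) * E := by
      have h1 : (1 - w * GG (3-α) 0) * E = |(1 - w * GG (3-α) 0) * e| := by
        rw [abs_mul, abs_of_nonneg hcoef, hEdef]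
      rw [h1, heq]
      refine le_trans (abs_add_le _ _) ?_
      have h2 : |w * T| ≤ w * (-(GG (3-α) 0)) * E := by
        rw [abs_mul, abs_of_nonneg hwnn]
        have h3 : w * |T| ≤ w * ((∑ m ∈ s', gCoef α N i₀ m) * E) :=
          mul_le_mul_of_nonneg_left hTb hwnn
        have h4 : w * ((∑ m ∈ s', gCoef α N i₀ m) * E) ≤ w * ((-(GG (3-α) 0)) * E) := by
          apply mul_le_mul_of_nonneg_left _ hwnn
          exact mul_le_mul_of_nonneg_right hrow hEnn
        calc w * |T| ≤ w * ((-(GG (3-α) 0)) * E) := le_trans h3 h4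
          _ = w * (-(GG (3-α) 0)) * E := by ring
      linarith [hRb]
    have hx2 : (1 - w * GG (3-α) 0) * E = E + w * (-(GG (3-α) 0)) * E := by ring
    rw [hx2] at hEbound
    linarith [hEbound]
end

section
/- (Theorem 3.3, case γ = 1: unconditional stability of the one-dimensional implicit scheme.) Let α ∈ (1,2], integers N ≥ 2 and N_t ≥ 1, reals τ > 0 and Δx > 0, and nonnegative reals c_{i,k} (1 ≤ i ≤ N-1, 1 ≤ k ≤ N_t). Set ω_{i,k} = -τ·κ_α·c_{i,k}/(Γ(4-α)·(Δx)^α) ≥ 0. Suppose real numbers ε^k_i (0 ≤ i ≤ N, 0 ≤ k ≤ N_t) satisfy ε^k_0 = ε^k_N = 0 for all 1 ≤ k ≤ N_t and, for all 1 ≤ i ≤ N-1 and 0 ≤ k ≤ N_t - 1, (1 - ω_{i,k+1}·g^{α,N}_{i,i})·ε^{k+1}_i - ω_{i,k+1}·Σ_{m=0, m≠i}^{N} g^{α,N}_{i,m}·ε^{k+1}_m = ε^k_i. Then for every 0 ≤ k ≤ N_t: max_{0≤i≤N} |ε^k_i| ≤ max_{0≤i≤N} |ε^0_i|. -/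
open Real Set

-- helper: midpoint second-difference inequalities
lemma concave_sd {f : ℝ → ℝ} {s : Set ℝ} (h : ConcaveOn ℝ s f) {x : ℝ}
    (h1 : x - 1 ∈ s) (h2 : x + 1 ∈ s) : f (x-1) + f (x+1) ≤ 2 * f x := by
  have := h.2 h1 h2 (by norm_num : (0:ℝ) ≤ 1/2) (by norm_num : (0:ℝ) ≤ 1/2) (by norm_num)
  rw [show (1/2:ℝ) • (x-1) + (1/2:ℝ) • (x+1) = x by rw [smul_eq_mul, smul_eq_mul]; ring,
    smul_eq_mul, smul_eq_mul] at this
  linarith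

lemma convex_sd {f : ℝ → ℝ} {s : Set ℝ} (h : ConvexOn ℝ s f) {x : ℝ}
    (h1 : x - 1 ∈ s) (h2 : x + 1 ∈ s) : 2 * f x ≤ f (x-1) + f (x+1) := by
  have := h.2 h1 h2 (by norm_num : (0:ℝ) ≤ 1/2) (by norm_num : (0:ℝ) ≤ 1/2) (by norm_num)
  rw [show (1/2:ℝ) • (x-1) + (1/2:ℝ) • (x+1) = x by rw [smul_eq_mul, smul_eq_mul]; ring,
    smul_eq_mul, smul_eq_mul] at this
  linarith

-- concavity of increments of x^b
lemma concave_incr {b : ℝ} (hb1 : 1 ≤ b) (hb2 : b ≤ 2) :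
    ConcaveOn ℝ (Ici 0) (fun x : ℝ => (x+1) ^ b - x ^ b) := by
  have hb0 : (0:ℝ) ≤ b := by linarith
  apply concaveOn_of_hasDerivWithinAt2_nonpos (f' := fun x => b*(x+1)^(b-1) - b*x^(b-1))
    (f'' := fun x => b*((b-1)*(x+1)^(b-2)) - b*((b-1)*x^(b-2))) (convex_Ici 0)
  · exact (((continuous_id.add continuous_const).rpow_const (fun x => Or.inr hb0)).sub
      (continuous_id.rpow_const (fun x => Or.inr hb0))).continuousOn
  · rw [interior_Ici]
    intro x hx
    have h1 : HasDerivAt (fun y : ℝ => (y+1)^b) (1 * b * (x+1)^(b-1)) x :=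
      ((hasDerivAt_id x).add_const 1).rpow_const (Or.inr hb1)
    have h2 : HasDerivAt (fun y : ℝ => y^b) (b * x^(b-1)) x :=
      Real.hasDerivAt_rpow_const (Or.inr hb1)
    have := (h1.sub h2).hasDerivWithinAt (s := interior (Ici (0:ℝ)))
    rw [interior_Ici] at this
    convert this using 1
    · rfl
    · rfl
    · rfl
    · ring
  · rw [interior_Ici]
    intro x hx
    rw [mem_Ioi] at hx
    have hx0 : x ≠ 0 := ne_of_gt hx
    have hx1 : x + 1 ≠ 0 := ne_of_gt (by linarith)
    have h1 : HasDerivAt (fun y : ℝ => (y+1)^(b-1)) (1 * (b-1) * (x+1)^(b-1-1)) x :=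
      ((hasDerivAt_id x).add_const 1).rpow_const (Or.inl hx1)
    have h2 : HasDerivAt (fun y : ℝ => y^(b-1)) ((b-1) * x^(b-1-1)) x :=
      Real.hasDerivAt_rpow_const (Or.inl hx0)
    have := ((h1.const_mul b).sub (h2.const_mul b)).hasDerivWithinAt (s := interior (Ici (0:ℝ)))
    rw [interior_Ici] at this
    convert this using 1
    · rfl
    · rfl
    · rfl
    · rw [show b - 1 - 1 = b - 2 by ring]; ring
  · rw [interior_Ici]
    intro x hx
    rw [mem_Ioi] at hx
    have key : (x+1)^(b-2) ≤ x^(b-2) :=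
      Real.rpow_le_rpow_of_nonpos hx (by linarith) (by linarith)
    have hbb : (0:ℝ) ≤ b * (b-1) := mul_nonneg hb0 (by linarith)
    nlinarith [mul_nonneg hbb (sub_nonneg.2 key)]

-- convexity of x ↦ x^c at negative exponents: midpoint form, pointwise
lemma rpow_neg_midpoint {c x : ℝ} (hc : c ≤ 0) (hx : 1 < x) :
    2 * x ^ c ≤ (x+1) ^ c + (x-1) ^ c := by
  have hx1 : (0:ℝ) < x + 1 := by linarith
  have hx2 : (0:ℝ) < x - 1 := by linarith
  have hx0 : (0:ℝ) < x := by linarith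
  have e1 : (x+1) ^ c = Real.exp (c * Real.log (x+1)) := by
    rw [Real.rpow_def_of_pos hx1]; ring_nf
  have e2 : (x-1) ^ c = Real.exp (c * Real.log (x-1)) := by
    rw [Real.rpow_def_of_pos hx2]; ring_nf
  have hmid := convexOn_exp.2 (mem_univ (c * Real.log (x+1))) (mem_univ (c * Real.log (x-1)))
    (by norm_num : (0:ℝ) ≤ 1/2) (by norm_num : (0:ℝ) ≤ 1/2) (by norm_num)
  rw [smul_eq_mul, smul_eq_mul, smul_eq_mul, smul_eq_mul] at hmid
  have hprod : (1/2:ℝ) * (c * Real.log (x+1)) + (1/2:ℝ) * (c * Real.log (x-1))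
      = (c/2) * Real.log ((x+1)*(x-1)) := by
    rw [Real.log_mul (ne_of_gt hx1) (ne_of_gt hx2)]; ring
  rw [hprod] at hmid
  have hexp : ((x+1)*(x-1)) ^ (c/2) = Real.exp ((c/2) * Real.log ((x+1)*(x-1))) := by
    rw [Real.rpow_def_of_pos (by nlinarith)]; ring_nf
  have hle : x ^ c ≤ ((x+1)*(x-1)) ^ (c/2) := by
    have h1 : ((x+1)*(x-1)) ^ (c/2) ≥ (x*x) ^ (c/2) :=
      Real.rpow_le_rpow_of_nonpos (by nlinarith) (by nlinarith) (by linarith)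
    have h2 : (x*x) ^ (c/2) = x ^ c := by
      rw [show x*x = x ^ (2:ℝ) by rw [show (2:ℝ) = ((2:ℕ):ℝ) by norm_num, Real.rpow_natCast]; ring,
        ← Real.rpow_mul (le_of_lt hx0)]
      ring_nf
    linarith [h2 ▸ h1]
  rw [e1, e2]
  calc 2 * x ^ c ≤ 2 * ((x+1)*(x-1)) ^ (c/2) := by linarith
    _ = 2 * Real.exp ((c/2) * Real.log ((x+1)*(x-1))) := by rw [hexp]
    _ ≤ Real.exp (c * Real.log (x+1)) + Real.exp (c * Real.log (x-1)) := by linarith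

/-- Second difference of `x ^ b`. -/
noncomputable def SSd (b x : ℝ) : ℝ := (x+1) ^ b - 2 * x ^ b + (x-1) ^ b

lemma convex_SSd {b : ℝ} (hb1 : 1 ≤ b) (hb2 : b ≤ 2) :
    ConvexOn ℝ (Ici 1) (SSd b) := by
  have hb0 : (0:ℝ) ≤ b := by linarith
  apply convexOn_of_hasDerivWithinAt2_nonneg
    (f' := fun x => b*(x+1)^(b-1) - 2*(b*x^(b-1)) + b*(x-1)^(b-1))
    (f'' := fun x => b*((b-1)*(x+1)^(b-2)) - 2*(b*((b-1)*x^(b-2))) + b*((b-1)*(x-1)^(b-2)))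
    (convex_Ici 1)
  · unfold SSd
    exact ((((continuous_id.add continuous_const).rpow_const (fun x => Or.inr hb0)).sub
      (continuous_const.mul (continuous_id.rpow_const (fun x => Or.inr hb0)))).add
      ((continuous_id.sub continuous_const).rpow_const (fun x => Or.inr hb0))).continuousOn
  · rw [interior_Ici]
    intro x hx
    have h1 : HasDerivAt (fun y : ℝ => (y+1)^b) (1 * b * (x+1)^(b-1)) x :=
      ((hasDerivAt_id x).add_const 1).rpow_const (Or.inr hb1)
    have h2 : HasDerivAt (fun y : ℝ => y^b) (b * x^(b-1)) x :=
      Real.hasDerivAt_rpow_const (Or.inr hb1)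
    have h3 : HasDerivAt (fun y : ℝ => (y-1)^b) (1 * b * (x-1)^(b-1)) x :=
      ((hasDerivAt_id x).sub_const 1).rpow_const (Or.inr hb1)
    have := ((h1.sub (h2.const_mul 2)).add h3).hasDerivWithinAt (s := interior (Ici (1:ℝ)))
    rw [interior_Ici] at this
    convert this using 1
    · rfl
    · rfl
    · rfl
    · ring
  · rw [interior_Ici]
    intro x hx
    rw [mem_Ioi] at hx
    have hx1 : x + 1 ≠ 0 := ne_of_gt (by linarith)
    have hx0 : x ≠ 0 := ne_of_gt (by linarith)
    have hxm : x - 1 ≠ 0 := ne_of_gt (by linarith)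
    have h1 : HasDerivAt (fun y : ℝ => (y+1)^(b-1)) (1 * (b-1) * (x+1)^(b-1-1)) x :=
      ((hasDerivAt_id x).add_const 1).rpow_const (Or.inl hx1)
    have h2 : HasDerivAt (fun y : ℝ => y^(b-1)) ((b-1) * x^(b-1-1)) x :=
      Real.hasDerivAt_rpow_const (Or.inl hx0)
    have h3 : HasDerivAt (fun y : ℝ => (y-1)^(b-1)) (1 * (b-1) * (x-1)^(b-1-1)) x :=
      ((hasDerivAt_id x).sub_const 1).rpow_const (Or.inl hxm)
    have := (((h1.const_mul b).sub ((h2.const_mul b).const_mul 2)).add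
      (h3.const_mul b)).hasDerivWithinAt (s := interior (Ici (1:ℝ)))
    rw [interior_Ici] at this
    convert this using 1
    · rfl
    · rfl
    · rfl
    · rw [show b - 1 - 1 = b - 2 by ring]; ring
  · rw [interior_Ici]
    intro x hx
    rw [mem_Ioi] at hx
    have key := rpow_neg_midpoint (c := b - 2) (x := x) (by linarith) hx
    have hbb : (0:ℝ) ≤ b * (b-1) := mul_nonneg hb0 (by linarith)
    nlinarith [mul_nonneg hbb (by linarith : (0:ℝ) ≤ (x+1)^(b-2) + (x-1)^(b-2) - 2*x^(b-2))]

lemma h1_nonneg {b : ℝ} (hb1 : 1 ≤ b) (hb2 : b ≤ 2) :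
    0 ≤ 7 + (3:ℝ) ^ b - 4 * (2:ℝ) ^ b := by
  set φ : ℝ → ℝ := fun t => 7 + (3:ℝ) ^ t - 4 * (2:ℝ) ^ t with hφ
  have hd : ∀ t : ℝ, HasDerivAt φ ((3:ℝ)^t * Real.log 3 - 4 * ((2:ℝ)^t * Real.log 2)) t := by
    intro t
    have h3 : HasDerivAt (fun x : ℝ => (3:ℝ)^x) ((3:ℝ)^t * Real.log 3) t :=
      (Real.hasStrictDerivAt_const_rpow (by norm_num) t).hasDerivAt
    have h2 : HasDerivAt (fun x : ℝ => (2:ℝ)^x) ((2:ℝ)^t * Real.log 2) t :=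
      (Real.hasStrictDerivAt_const_rpow (by norm_num) t).hasDerivAt
    exact (h3.const_add 7).sub (h2.const_mul 4)
  have hlog : 9 * Real.log 3 ≤ 16 * Real.log 2 := by
    have h := Real.log_le_log (by positivity : (0:ℝ) < 3^(9:ℕ))
      (by norm_num : ((3:ℝ))^(9:ℕ) ≤ 2^(16:ℕ))
    rw [Real.log_pow, Real.log_pow] at h
    push_cast at h; linarith
  have hanti : AntitoneOn φ (Icc 1 2) := by
    apply antitoneOn_of_deriv_nonpos (convex_Icc 1 2)
    · exact fun t _ => ((hd t).differentiableAt).continuousAt.continuousWithinAt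
    · exact fun t _ => ((hd t).differentiableAt).differentiableWithinAt
    · intro t ht
      rw [interior_Icc, mem_Ioo] at ht
      rw [(hd t).deriv]
      have h32 : (3:ℝ)^t ≤ (2:ℝ)^t * (9/4) := by
        have e : (3:ℝ)^t = (2:ℝ)^t * (3/2:ℝ)^t := by
          rw [← Real.mul_rpow (by norm_num) (by norm_num)]; norm_num
        have hle : (3/2:ℝ)^t ≤ (3/2:ℝ)^(2:ℝ) :=
          Real.rpow_le_rpow_of_exponent_le (by norm_num) (by linarith)
        have he2 : (3/2:ℝ)^(2:ℝ) = 9/4 := by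
          rw [show (2:ℝ) = ((2:ℕ):ℝ) by norm_num, Real.rpow_natCast]; norm_num
        rw [e]
        have h2p : (0:ℝ) < (2:ℝ)^t := Real.rpow_pos_of_pos (by norm_num) t
        nlinarith [hle, he2]
      have h2p : (0:ℝ) < (2:ℝ)^t := Real.rpow_pos_of_pos (by norm_num) t
      have hl3 : (0:ℝ) ≤ Real.log 3 := Real.log_nonneg (by norm_num)
      nlinarith [mul_le_mul_of_nonneg_right h32 hl3,
        mul_le_mul_of_nonneg_left hlog (le_of_lt h2p)]
  have := hanti (Set.mem_Icc.2 ⟨hb1, hb2⟩) (Set.mem_Icc.2 ⟨by norm_num, le_refl 2⟩) hb2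
  have hφ2 : φ 2 = 0 := by
    simp only [hφ]
    rw [show (2:ℝ) = ((2:ℕ):ℝ) by norm_num, Real.rpow_natCast, Real.rpow_natCast]
    norm_num
  simp only [hφ] at this hφ2 ⊢
  linarith

/-- The generic coefficient appearing at distance `d ≥ 1` from the diagonal. -/
noncomputable def TermF (b : ℝ) (d : ℕ) : ℝ :=
  if d = 1 then 2 - 2 * SSd b 1 + SSd b 2
  else SSd b ((d:ℝ)-1) - 2 * SSd b (d:ℝ) + SSd b ((d:ℝ)+1)

lemma TermF_of_ne {b : ℝ} {d : ℕ} (h : d ≠ 1) :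
    TermF b d = SSd b ((d:ℝ)-1) - 2 * SSd b (d:ℝ) + SSd b ((d:ℝ)+1) := by
  rw [TermF, if_neg h]

lemma SSd_one {b : ℝ} (hb : 0 < b) : SSd b 1 = (2:ℝ)^b - 2 := by
  unfold SSd
  rw [show (1:ℝ)+1 = 2 by norm_num, show (1:ℝ)-1 = 0 by norm_num,
    Real.zero_rpow (ne_of_gt hb), Real.one_rpow]
  ring

lemma SSd_two {b : ℝ} : SSd b 2 = (3:ℝ)^b - 2*(2:ℝ)^b + 1 := by
  unfold SSd
  norm_num [Real.one_rpow]

lemma SSd_antitone {b : ℝ} (hb1 : 1 ≤ b) (hb2 : b ≤ 2) {x : ℝ} (hx : 1 ≤ x) :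
    SSd b (x+1) ≤ SSd b x := by
  have hc := concave_sd (concave_incr hb1 hb2) (x := x)
    (by simp only [mem_Ici]; linarith) (by simp only [mem_Ici]; linarith)
  rw [show x - 1 + 1 = x by ring, show x + 1 + 1 = x + 2 by ring] at hc
  unfold SSd
  rw [show x + 1 + 1 = x + 2 by ring, show x + 1 - 1 = x by ring]
  linarith

lemma TermF_nonneg {b : ℝ} (hb1 : 1 ≤ b) (hb2 : b ≤ 2) {d : ℕ} (hd : 1 ≤ d) :
    0 ≤ TermF b d := by
  have hb0 : (0:ℝ) < b := by linarith
  by_cases h1 : d = 1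
  · rw [TermF, if_pos h1, SSd_one hb0, SSd_two]
    have := h1_nonneg hb1 hb2
    linarith
  · have hd2 : 2 ≤ d := by omega
    have hd2' : (2:ℝ) ≤ (d:ℝ) := by exact_mod_cast hd2
    rw [TermF, if_neg h1]
    have hc := convex_sd (convex_SSd hb1 hb2) (x := (d:ℝ))
      (by simp only [mem_Ici]; linarith) (by simp only [mem_Ici]; linarith)
    linarith

lemma TermF_sum_id {b : ℝ} : ∀ n : ℕ, 2 ≤ n →
    ∑ d ∈ Finset.Ioo 0 n, TermF b d
      = TermF b 1 + (SSd b (n:ℝ) - SSd b ((n:ℝ)-1)) - (SSd b 2 - SSd b 1) := by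
  intro n hn
  induction n, hn using Nat.le_induction with
  | base =>
    have : Finset.Ioo 0 2 = {1} := by decide
    rw [this, Finset.sum_singleton]
    norm_num
  | succ n hn ih =>
    have hIoo : ∀ m : ℕ, Finset.Ioo 0 m = Finset.Ico 1 m := by
      intro m; exact (Finset.Ico_add_one_left_eq_Ioo 0 m).symm
    rw [hIoo, Finset.sum_Ico_succ_top (by omega : 1 ≤ n), ← hIoo, ih]
    have hn1 : n ≠ 1 := by omega
    rw [TermF_of_ne hn1]
    push_cast
    ring

lemma TermF_sum_le {b : ℝ} (hb1 : 1 ≤ b) (hb2 : b ≤ 2) (n : ℕ) :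
    ∑ d ∈ Finset.Ioo 0 n, TermF b d ≤ 4 - (2:ℝ)^b := by
  have hb0 : (0:ℝ) < b := by linarith
  have h4 : (2:ℝ)^b ≤ 4 := by
    calc (2:ℝ)^b ≤ (2:ℝ)^(2:ℝ) :=
          Real.rpow_le_rpow_of_exponent_le one_le_two hb2
      _ = 4 := by rw [show (2:ℝ) = ((2:ℕ):ℝ) by norm_num, Real.rpow_natCast]; norm_num
  by_cases hn : n ≤ 1
  · have : Finset.Ioo 0 n = ∅ := by
      ext x
      simp only [Finset.mem_Ioo, Finset.notMem_empty, iff_false, not_and, not_lt]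
      omega
    rw [this, Finset.sum_empty]
    linarith
  · have hn2 : 2 ≤ n := by omega
    rw [TermF_sum_id n hn2]
    have hn2' : (2:ℝ) ≤ (n:ℝ) := by exact_mod_cast hn2
    have hmono : SSd b (n:ℝ) ≤ SSd b ((n:ℝ)-1) := by
      have := SSd_antitone hb1 hb2 (x := (n:ℝ)-1) (by linarith)
      rw [show (n:ℝ) - 1 + 1 = (n:ℝ) by ring] at this
      exact this
    rw [TermF, if_pos rfl, SSd_one hb0]
    linarith

section gEval

variable {α : ℝ} {N i m j : ℕ}

lemma aCoef_eval (h1 : 1 ≤ m) (h2 : m < j) :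
    aCoef α j m = SSd (3-α) ((j:ℝ) - (m:ℝ)) := by
  rw [aCoef, if_neg (by omega : ¬ m = j), if_neg (by omega : ¬ m = 0), SSd]

lemma bCoef_eval (h1 : j < m) (h2 : m < N) :
    bCoef α N j m = SSd (3-α) ((m:ℝ) - (j:ℝ)) := by
  rw [bCoef, if_neg (by omega : ¬ m = j), if_neg (by omega : ¬ m = N), SSd]

lemma aCoef_diag : aCoef α j j = 1 := by rw [aCoef, if_pos rfl]

lemma bCoef_diag : bCoef α N j j = 1 := by rw [bCoef, if_pos rfl]

lemma gCoef_diag (h1 : 1 ≤ i) (h2 : i < N) :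
    gCoef α N i i = 2 * SSd (3-α) 1 - 4 := by
  rw [gCoef, pCoef, if_neg (lt_irrefl i), if_pos rfl,
    qCoef, if_neg (by omega : ¬ i + 1 < i), if_neg (by omega : ¬ i + 1 = i), if_pos rfl,
    aCoef_diag, bCoef_diag,
    aCoef_eval h1 (by omega : i < i + 1), bCoef_eval (by omega : i - 1 < i) h2,
    show ((i+1:ℕ):ℝ) - (i:ℝ) = 1 by push_cast; ring,
    show ((i:ℕ):ℝ) - ((i-1:ℕ):ℝ) = 1 by rw [Nat.cast_sub h1]; push_cast; ring]
  ring

lemma gCoef_left (hm : 1 ≤ m) (hmi : m < i) (hiN : i < N) :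
    gCoef α N i m = TermF (3-α) (i - m) := by
  by_cases hd : m = i - 1
  · have hi2 : 2 ≤ i := by omega
    rw [gCoef, pCoef, if_pos hmi,
      qCoef, if_neg (by omega : ¬ m + 1 < i), if_pos (by omega : m + 1 = i),
      show i - 1 = m by omega, aCoef_diag, bCoef_diag,
      aCoef_eval hm hmi, aCoef_eval hm (by omega : m < i + 1),
      show ((i:ℕ):ℝ) - (m:ℝ) = 1 by rw [show i = m + 1 by omega]; push_cast; ring,
      show ((i+1:ℕ):ℝ) - (m:ℝ) = 2 by rw [show i = m + 1 by omega]; push_cast; ring,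
      show i - m = 1 by omega, TermF, if_pos rfl]
    ring
  · have hmi2 : m < i - 1 := by omega
    rw [gCoef, pCoef, if_pos hmi,
      qCoef, if_pos (by omega : m + 1 < i),
      aCoef_eval hm (by omega : m < i - 1), aCoef_eval hm hmi,
      aCoef_eval hm (by omega : m < i + 1),
      TermF_of_ne (by omega : i - m ≠ 1),
      show ((i-1:ℕ):ℝ) - (m:ℝ) = ((i-m:ℕ):ℝ) - 1 by
        rw [Nat.cast_sub (by omega : 1 ≤ i), Nat.cast_sub (by omega : m ≤ i)]; ring,
      show ((i:ℕ):ℝ) - (m:ℝ) = ((i-m:ℕ):ℝ) by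
        rw [Nat.cast_sub (by omega : m ≤ i)],
      show ((i+1:ℕ):ℝ) - (m:ℝ) = ((i-m:ℕ):ℝ) + 1 by
        rw [Nat.cast_sub (by omega : m ≤ i)]; push_cast; ring]
    ring

lemma gCoef_right (hi : 1 ≤ i) (him : i < m) (hmN : m < N) :
    gCoef α N i m = TermF (3-α) (m - i) := by
  by_cases hd : m = i + 1
  · subst hd
    rw [gCoef, pCoef, if_neg (by omega : ¬ i + 1 < i), if_neg (by omega : ¬ i + 1 = i),
      if_pos rfl,
      qCoef, if_neg (by omega : ¬ i + 1 + 1 < i), if_neg (by omega : ¬ i + 1 + 1 = i),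
      if_neg (by omega : ¬ i + 1 = i),
      aCoef_diag, bCoef_diag,
      bCoef_eval (by omega : i - 1 < i + 1) hmN, bCoef_eval (by omega : i < i + 1) hmN,
      show ((i+1:ℕ):ℝ) - ((i-1:ℕ):ℝ) = 2 by
        rw [Nat.cast_sub hi]; push_cast; ring,
      show ((i+1:ℕ):ℝ) - ((i:ℕ):ℝ) = 1 by push_cast; ring,
      show i + 1 - i = 1 by omega, TermF, if_pos rfl]
    ring
  · rw [gCoef, pCoef, if_neg (by omega : ¬ m < i), if_neg (by omega : ¬ m = i),
      if_neg (by omega : ¬ m = i + 1),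
      qCoef, if_neg (by omega : ¬ m + 1 < i), if_neg (by omega : ¬ m + 1 = i),
      if_neg (by omega : ¬ m = i),
      bCoef_eval (by omega : i - 1 < m) hmN, bCoef_eval him hmN,
      bCoef_eval (by omega : i + 1 < m) hmN,
      TermF_of_ne (by omega : m - i ≠ 1),
      show ((m:ℕ):ℝ) - ((i-1:ℕ):ℝ) = ((m-i:ℕ):ℝ) + 1 by
        rw [Nat.cast_sub hi, Nat.cast_sub (by omega : i ≤ m)]; ring,
      show ((m:ℕ):ℝ) - ((i:ℕ):ℝ) = ((m-i:ℕ):ℝ) by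
        rw [Nat.cast_sub (by omega : i ≤ m)],
      show ((m:ℕ):ℝ) - ((i+1:ℕ):ℝ) = ((m-i:ℕ):ℝ) - 1 by
        rw [Nat.cast_sub (by omega : i ≤ m)]; push_cast; ring]
    ring

end gEval

lemma sum_gCoef_le {α : ℝ} {N i : ℕ} (hα1 : 1 < α) (hα2 : α ≤ 2)
    (hi : 1 ≤ i) (hiN : i < N) :
    ∑ m ∈ (Finset.Ioo 0 N).erase i, gCoef α N i m ≤ 8 - 2 * (2:ℝ)^(3-α) := by
  have hb1 : (1:ℝ) ≤ 3 - α := by linarith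
  have hb2 : (3:ℝ) - α ≤ 2 := by linarith
  have hsplit : (Finset.Ioo 0 N).erase i = Finset.Ioo 0 i ∪ Finset.Ioo i N := by
    ext x
    simp only [Finset.mem_erase, Finset.mem_Ioo, Finset.mem_union]
    omega
  have hdisj : Disjoint (Finset.Ioo 0 i) (Finset.Ioo i N) := by
    rw [Finset.disjoint_left]
    intro x hx hx'
    simp only [Finset.mem_Ioo] at hx hx'
    omega
  rw [hsplit, Finset.sum_union hdisj]
  have hleft : ∑ m ∈ Finset.Ioo 0 i, gCoef α N i m = ∑ d ∈ Finset.Ioo 0 i, TermF (3-α) d := by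
    apply Finset.sum_nbij' (i := fun m => i - m) (j := fun d => i - d)
    · intro a ha; simp only [Finset.mem_Ioo] at *; omega
    · intro a ha; simp only [Finset.mem_Ioo] at *; omega
    · intro a ha; simp only [Finset.mem_Ioo] at ha; omega
    · intro a ha; simp only [Finset.mem_Ioo] at ha; omega
    · intro a ha
      simp only [Finset.mem_Ioo] at ha
      exact gCoef_left (by omega) ha.2 hiN
  have hright : ∑ m ∈ Finset.Ioo i N, gCoef α N i m = ∑ d ∈ Finset.Ioo 0 (N - i), TermF (3-α) d := by
    apply Finset.sum_nbij' (i := fun m => m - i) (j := fun d => d + i)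
    · intro a ha; simp only [Finset.mem_Ioo] at *; omega
    · intro a ha; simp only [Finset.mem_Ioo] at *; omega
    · intro a ha; simp only [Finset.mem_Ioo] at ha; omega
    · intro a ha; simp only [Finset.mem_Ioo] at ha; omega
    · intro a ha
      simp only [Finset.mem_Ioo] at ha
      exact gCoef_right hi ha.1 ha.2
  rw [hleft, hright]
  have h1 := TermF_sum_le hb1 hb2 i
  have h2 := TermF_sum_le hb1 hb2 (N - i)
  linarith

lemma gCoef_nonneg_off {α : ℝ} {N i m : ℕ} (hα1 : 1 < α) (hα2 : α ≤ 2)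
    (hi : 1 ≤ i) (hiN : i < N) (hm : 1 ≤ m) (hmN : m < N) (hne : m ≠ i) :
    0 ≤ gCoef α N i m := by
  have hb1 : (1:ℝ) ≤ 3 - α := by linarith
  have hb2 : (3:ℝ) - α ≤ 2 := by linarith
  rcases lt_or_gt_of_ne hne with h | h
  · rw [gCoef_left hm h hiN]; exact TermF_nonneg hb1 hb2 (by omega)
  · rw [gCoef_right hi h hmN]; exact TermF_nonneg hb1 hb2 (by omega)

/-- Theorem 3.3 (case `γ = 1`): unconditional stability of the one-dimensional
implicit finite difference scheme. -/
theorem implicit_1d_stable_gamma_one (α : ℝ) (hα : α ∈ Set.Ioc (1:ℝ) 2)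
    (N Nt : ℕ) (hN : 2 ≤ N) (hNt : 1 ≤ Nt)
    (τ Δx : ℝ) (hτ : 0 < τ) (hΔx : 0 < Δx)
    (c : ℕ → ℕ → ℝ)
    (hc : ∀ i k : ℕ, 1 ≤ i → i ≤ N - 1 → 1 ≤ k → k ≤ Nt → 0 ≤ c i k)
    (ω : ℕ → ℕ → ℝ)
    (hω : ∀ i k : ℕ, 1 ≤ i → i ≤ N - 1 → 1 ≤ k → k ≤ Nt →
      ω i k = -(τ * kappa α * c i k) / (Real.Gamma (4 - α) * Δx ^ α))
    (ε : ℕ → ℕ → ℝ)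
    (hbc : ∀ k : ℕ, 1 ≤ k → k ≤ Nt → ε k 0 = 0 ∧ ε k N = 0)
    (hscheme : ∀ i k : ℕ, 1 ≤ i → i ≤ N - 1 → k + 1 ≤ Nt →
      (1 - ω i (k + 1) * gCoef α N i i) * ε (k + 1) i
        - ω i (k + 1) * ∑ m ∈ (Finset.range (N + 1)).erase i, gCoef α N i m * ε (k + 1) m
      = ε k i) :
    ∀ k : ℕ, k ≤ Nt → maxAbs N (ε k) ≤ maxAbs N (ε 0) := by
  obtain ⟨hα1, hα2⟩ := hα
  have hb1 : (1:ℝ) ≤ 3 - α := by linarith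
  have hb2 : (3:ℝ) - α ≤ 2 := by linarith
  have h2b : (2:ℝ)^(3-α) ≤ 4 := by
    calc (2:ℝ)^(3-α) ≤ (2:ℝ)^(2:ℝ) :=
          Real.rpow_le_rpow_of_exponent_le one_le_two hb2
      _ = 4 := by rw [show (2:ℝ) = ((2:ℕ):ℝ) by norm_num, Real.rpow_natCast]; norm_num
  have hωn : ∀ i k : ℕ, 1 ≤ i → i ≤ N - 1 → 1 ≤ k → k ≤ Nt → 0 ≤ ω i k := by
    intro i k h1 h2 h3 h4
    rw [hω i k h1 h2 h3 h4]
    have hπ := Real.pi_pos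
    have hcos : Real.cos (α * Real.pi / 2) < 0 := by
      apply Real.cos_neg_of_pi_div_two_lt_of_lt
      · nlinarith
      · nlinarith
    have hκ : kappa α < 0 := by
      rw [kappa]
      exact one_div_neg.2 (by linarith)
    have hΓ : 0 < Real.Gamma (4 - α) := Real.Gamma_pos_of_pos (by linarith)
    have hΔ : (0:ℝ) < Δx ^ α := Real.rpow_pos_of_pos hΔx α
    have hcik := hc i k h1 h2 h3 h4
    apply div_nonneg
    · nlinarith [mul_nonneg (mul_nonneg hτ.le (neg_nonneg.2 hκ.le)) hcik]
    · exact le_of_lt (mul_pos hΓ hΔ)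
  intro k hk
  induction k with
  | zero => exact le_refl _
  | succ n ih =>
    have hNt1 : n + 1 ≤ Nt := hk
    have hstep : maxAbs N (ε (n+1)) ≤ maxAbs N (ε n) := by
      have hMk0 : 0 ≤ maxAbs N (ε n) := by
        rw [maxAbs]
        exact le_trans (abs_nonneg (ε n 0)) (Finset.le_sup' (fun j => |ε n j|) (show 0 ∈ Finset.range (N+1) by simp))
      obtain ⟨i, hiMem, hiEq⟩ := Finset.exists_mem_eq_sup'
        (Finset.nonempty_range_add_one (n := N)) (fun j => |ε (n+1) j|)
      have hMeq : maxAbs N (ε (n+1)) = |ε (n+1) i| := by rw [maxAbs]; exact hiEq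
      rw [Finset.mem_range] at hiMem
      by_cases hi0 : i = 0
      · rw [hMeq, hi0, (hbc (n+1) (by omega) hNt1).1, abs_zero]; exact hMk0
      by_cases hiN : i = N
      · rw [hMeq, hiN, (hbc (n+1) (by omega) hNt1).2, abs_zero]; exact hMk0
      have hi1 : 1 ≤ i := by omega
      have hiltN : i < N := by omega
      have hsch := hscheme i n hi1 (by omega) hNt1
      have hw0 : 0 ≤ ω i (n+1) := hωn i (n+1) hi1 (by omega) (by omega) hNt1
      have habsM : ∀ m, m ≤ N → |ε (n+1) m| ≤ maxAbs N (ε (n+1)) := by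
        intro m hm
        rw [maxAbs]
        exact Finset.le_sup' (fun j => |ε (n+1) j|) (show m ∈ Finset.range (N+1) by simp; omega)
      have hM0 : 0 ≤ maxAbs N (ε (n+1)) := le_trans (abs_nonneg _) (habsM 0 (by omega))
      have hgd : gCoef α N i i = 2 * SSd (3-α) 1 - 4 := gCoef_diag hi1 hiltN
      have hS1 : SSd (3-α) 1 = (2:ℝ)^(3-α) - 2 := SSd_one (by linarith)
      have hsum : |∑ m ∈ (Finset.range (N+1)).erase i, gCoef α N i m * ε (n+1) m|
          ≤ (8 - 2*(2:ℝ)^(3-α)) * maxAbs N (ε (n+1)) := by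
        calc |∑ m ∈ (Finset.range (N+1)).erase i, gCoef α N i m * ε (n+1) m|
            ≤ ∑ m ∈ (Finset.range (N+1)).erase i, |gCoef α N i m * ε (n+1) m| :=
              Finset.abs_sum_le_sum_abs _ _
          _ ≤ ∑ m ∈ (Finset.range (N+1)).erase i,
                (if 0 < m ∧ m < N then gCoef α N i m * maxAbs N (ε (n+1)) else 0) := by
              apply Finset.sum_le_sum
              intro m hm
              rw [Finset.mem_erase, Finset.mem_range] at hm
              by_cases hcase : 0 < m ∧ m < N
              · rw [if_pos hcase, abs_mul]
                have hg0 := gCoef_nonneg_off hα1 hα2 hi1 hiltN (by omega) hcase.2 hm.1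
                rw [abs_of_nonneg hg0]
                exact mul_le_mul_of_nonneg_left (habsM m (by omega)) hg0
              · rw [if_neg hcase]
                have hm0 : m = 0 ∨ m = N := by omega
                rcases hm0 with h | h
                · rw [h, (hbc (n+1) (by omega) hNt1).1, mul_zero, abs_zero]
                · rw [h, (hbc (n+1) (by omega) hNt1).2, mul_zero, abs_zero]
          _ = ∑ m ∈ (Finset.Ioo 0 N).erase i, gCoef α N i m * maxAbs N (ε (n+1)) := by
              rw [← Finset.sum_filter]
              apply Finset.sum_congr _ (fun x _ => rfl)
              ext x
              simp only [Finset.mem_filter, Finset.mem_erase, Finset.mem_range, Finset.mem_Ioo]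
              omega
          _ = (∑ m ∈ (Finset.Ioo 0 N).erase i, gCoef α N i m) * maxAbs N (ε (n+1)) :=
              (Finset.sum_mul _ _ _).symm
          _ ≤ (8 - 2*(2:ℝ)^(3-α)) * maxAbs N (ε (n+1)) :=
              mul_le_mul_of_nonneg_right (sum_gCoef_le hα1 hα2 hi1 hiltN) hM0
      have hco : 0 ≤ 1 - ω i (n+1) * gCoef α N i i := by
        rw [hgd, hS1]; nlinarith
      have hkey : (1 - ω i (n+1) * gCoef α N i i) * |ε (n+1) i|
          ≤ maxAbs N (ε n) + ω i (n+1) * ((8 - 2*(2:ℝ)^(3-α)) * maxAbs N (ε (n+1))) := by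
        calc (1 - ω i (n+1) * gCoef α N i i) * |ε (n+1) i|
            = |(1 - ω i (n+1) * gCoef α N i i) * ε (n+1) i| := by
              rw [abs_mul, abs_of_nonneg hco]
          _ = |ε n i + ω i (n+1) *
                ∑ m ∈ (Finset.range (N+1)).erase i, gCoef α N i m * ε (n+1) m| := by
              rw [show (1 - ω i (n+1) * gCoef α N i i) * ε (n+1) i
                = ε n i + ω i (n+1) *
                  ∑ m ∈ (Finset.range (N+1)).erase i, gCoef α N i m * ε (n+1) m from by
                linarith [hsch]]
          _ ≤ |ε n i| + |ω i (n+1) *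
                ∑ m ∈ (Finset.range (N+1)).erase i, gCoef α N i m * ε (n+1) m| := abs_add_le _ _
          _ ≤ maxAbs N (ε n) + ω i (n+1) * ((8 - 2*(2:ℝ)^(3-α)) * maxAbs N (ε (n+1))) := by
              have h1 : |ε n i| ≤ maxAbs N (ε n) := by
                rw [maxAbs]
                exact Finset.le_sup' (fun j => |ε n j|) (show i ∈ Finset.range (N+1) by simp; omega)
              rw [abs_mul, abs_of_nonneg hw0]
              have := mul_le_mul_of_nonneg_left hsum hw0
              linarith
      rw [hMeq]
      rw [hMeq, hgd, hS1] at hkey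
      nlinarith [hkey, hw0, hM0, mul_nonneg hw0 hM0]
    exact hstep.trans (ih (by omega))
end
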